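/- Let $I\subseteq\{0,\ldots,d\}$ with $0\in I$. Then $\Diamond^d(\Gamma^d_I)=\Diamond^d(\Gamma^d_{I\setminus\{0\}})\cup\Diamond^d(\Gamma^d_0)$, the intersection is $\Diamond^d(\Gamma^d_{I\setminus\{0\}})\cap\Diamond^d(\Gamma^d_0)=\pi(\Diamond^{d-1}(\Gamma^{d-1}_{(I\setminus\{0\})-1}))$, and $\Diamond^d(\Gamma^d_0)$ is an induced subcomplex of $\Diamond^d(\Gamma^d_I)$. -/

import Mathlib

namespace Paper

/-- Ambient vertex type in dimension `d`: original vertices `0,…,d+1` (left)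
and new vertices `v_0,…,v_d` (right). -/
abbrev V (d : ℕ) := Sum (Fin (d+2)) (Fin (d+1))

def origV (d m : ℕ) : V d := Sum.inl ⟨m % (d+2), Nat.mod_lt m (by omega)⟩
def newV (d m : ℕ) : V d := Sum.inr ⟨m % (d+1), Nat.mod_lt m (by omega)⟩

variable {W : Type*} [DecidableEq W] {W' : Type*} [DecidableEq W']

def IsComplex (Δ : Set (Finset W)) : Prop := ∀ F ∈ Δ, ∀ G, G ⊆ F → G ∈ Δ

def isFacet (Δ : Set (Finset W)) (F : Finset W) : Prop :=
  F ∈ Δ ∧ ∀ G ∈ Δ, F ⊆ G → G = F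

def simplexOn (A : Finset W) : Set (Finset W) := {F | F ⊆ A}

def bdrySimplex (A : Finset W) : Set (Finset W) := {F | F ⊂ A}

def joinC (Δ Γ : Set (Finset W)) : Set (Finset W) := {s | ∃ a ∈ Δ, ∃ b ∈ Γ, s = a ∪ b}

def lkC (Δ : Set (Finset W)) (F : Finset W) : Set (Finset W) :=
  {G | Disjoint F G ∧ F ∪ G ∈ Δ}

def delFace (Δ : Set (Finset W)) (F : Finset W) : Set (Finset W) := {G ∈ Δ | ¬ F ⊆ G}

/-- Stellar subdivision at `F` with new vertex `v`. -/
def sdC (v : W) (F : Finset W) (Δ : Set (Finset W)) : Set (Finset W) :=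
  delFace Δ F ∪ joinC (simplexOn {v}) (joinC (bdrySimplex F) (lkC Δ F))

/-- Deletion of a subcomplex: the complex generated by the facets of `Δ`
that are not facets of `Γ`. -/
def delSub (Δ Γ : Set (Finset W)) : Set (Finset W) :=
  {G | ∃ F, isFacet Δ F ∧ ¬ isFacet Γ F ∧ G ⊆ F}

def IsInduced (Γ Δ : Set (Finset W)) : Prop :=
  Γ ⊆ Δ ∧ ∀ F ∈ Δ, (∀ v ∈ F, ({v} : Finset W) ∈ Γ) → F ∈ Γ

/-- Simplicial isomorphism (via a permutation of the ambient vertex set). -/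
def IsoC (Δ Γ : Set (Finset W)) : Prop :=
  ∃ e : Equiv.Perm W, ∀ F : Finset W, F ∈ Δ ↔ F.image (⇑e) ∈ Γ

def mapC (f : W → W') (Δ : Set (Finset W)) : Set (Finset W') := {F | ∃ G ∈ Δ, F = G.image f}

/-- Number of faces of cardinality `i` (i.e. dimension `i-1`). -/
noncomputable def fnum (Δ : Set (Finset W)) (i : ℕ) : ℕ := {F | F ∈ Δ ∧ F.card = i}.ncard

/-- `h`-numbers of a `d`-dimensional complex. -/
noncomputable def hnum (d : ℕ) (Δ : Set (Finset W)) (j : ℕ) : ℤ :=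
  ∑ i ∈ Finset.range (j+1),
    (-1 : ℤ)^(j-i) * ((d+1-i).choose (d+1-j) : ℤ) * (fnum Δ i : ℤ)

/-- `R` is the restriction face of the `i`-th facet of the ordering `L`. -/
def IsRestriction (L : List (Finset W)) (i : ℕ) (R : Finset W) : Prop :=
  R ⊆ L.getD i ∅ ∧ (∀ j < i, ¬ R ⊆ L.getD j ∅) ∧
    ∀ G ⊆ L.getD i ∅, (∀ j < i, ¬ G ⊆ L.getD j ∅) → R ⊆ G

def IsShelling (Δ : Set (Finset W)) (L : List (Finset W)) : Prop :=
  L.Nodup ∧ (∀ F, F ∈ L ↔ isFacet Δ F) ∧ ∀ i < L.length, ∃ R, IsRestriction L i R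

def Shellable (Δ : Set (Finset W)) : Prop := ∃ L, IsShelling Δ L

def IsRelRestriction (Sg : Set (Finset W)) (L : List (Finset W)) (i : ℕ) (R : Finset W) : Prop :=
  R ⊆ L.getD i ∅ ∧ R ∉ Sg ∧ (∀ j < i, ¬ R ⊆ L.getD j ∅) ∧
    ∀ G ⊆ L.getD i ∅, G ∉ Sg → (∀ j < i, ¬ G ⊆ L.getD j ∅) → R ⊆ G

/-- Shelling of the relative complex `(Δ, Sg)`. -/
def IsRelShelling (Δ Sg : Set (Finset W)) (L : List (Finset W)) : Prop :=
  L.Nodup ∧ (∀ F, F ∈ L ↔ (isFacet Δ F ∧ F ∉ Sg)) ∧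
    ∀ i < L.length, ∃ R, IsRelRestriction Sg L i R

/-- The facet of the `(d+1)`-simplex on `{0,…,d+1}` omitting vertex `i`. -/
def Gface (d i : ℕ) : Finset (V d) :=
  ((Finset.range (d+2)).filter (fun j => j ≠ i)).image (origV d)

def GammaC (d i : ℕ) : Set (Finset (V d)) := simplexOn (Gface d i)

def GammaU (d : ℕ) (I : Finset ℕ) : Set (Finset (V d)) := {F | ∃ i ∈ I, F ⊆ Gface d i}

/-- The face `F_i = {i+1,…,d+1}` subdivided by the diamond operation. -/
def Fsub (d i : ℕ) : Finset (V d) := (Finset.Ioc i (d+1)).image (origV d)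

/-- The diamond operation: successive stellar subdivisions at `F_0, F_1, …, F_d`
with new vertices `v_0,…,v_d` (subdivision at a non-face has no effect). -/
def Diam (d : ℕ) (Δ : Set (Finset (V d))) : Set (Finset (V d)) :=
  (List.range (d+1)).foldl (fun Γ i => sdC (newV d i) (Fsub d i) Γ) Δ

def DiamU (d : ℕ) (I : Finset ℕ) : Set (Finset (V d)) := Diam d (GammaU d I)

/-- Boundary complex of the cross-polytope on the vertex pairs `{j, v_j}`, `j ∈ S`. -/
def crossN (d : ℕ) (S : Finset ℕ) : Set (Finset (V d)) :=
  {F | (∀ x ∈ F, ∃ j ∈ S, x = origV d j ∨ x = newV d j) ∧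
       ∀ j ∈ S, ¬ (origV d j ∈ F ∧ newV d j ∈ F)}

/-- Boundary complex: generated by the faces of cardinality `n` contained in
exactly one facet. -/
def bdryC (n : ℕ) (Δ : Set (Finset W)) : Set (Finset W) :=
  {G | ∃ F, G ⊆ F ∧ F ∈ Δ ∧ F.card = n ∧ ∃! H, isFacet Δ H ∧ F ⊆ H}

/-- Positions in `P` at which `G` differs from the reference facet `F0`. -/
def diffSet (d : ℕ) (P : Finset ℕ) (F0 G : Finset (V d)) : Finset ℕ :=
  P.filter (fun j => decide (origV d j ∈ G) ≠ decide (origV d j ∈ F0))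

/-- Degree lexicographic comparison of characteristic (difference) sets. -/
def dlexLT (D D' : Finset ℕ) : Prop :=
  D.card < D'.card ∨
    (D.card = D'.card ∧ ∃ m, m ∉ D ∧ m ∈ D' ∧ ∀ j < m, (j ∈ D ↔ j ∈ D'))

/-- `L` lists the facets of `Δ` in degree lexicographic order w.r.t. `F0`. -/
def IsDegLexOrder (d : ℕ) (P : Finset ℕ) (Δ : Set (Finset (V d)))
    (F0 : Finset (V d)) (L : List (Finset (V d))) : Prop :=
  L.Nodup ∧ (∀ F, F ∈ L ↔ isFacet Δ F) ∧
    L.Pairwise (fun G G' => dlexLT (diffSet d P F0 G) (diffSet d P F0 G'))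

/-- Vertices of `F` sitting at the positions in `D`. -/
def posVerts (d : ℕ) (F : Finset (V d)) (D : Finset ℕ) : Finset (V d) :=
  F.filter (fun x => ∃ j ∈ D, x = origV d j ∨ x = newV d j)

def IsoN (Δ Γ : Set (Finset ℕ)) : Prop :=
  ∃ e : Equiv.Perm ℕ, ∀ F : Finset ℕ, F ∈ Δ ↔ F.image (⇑e) ∈ Γ

def StellarMove (Δ Γ : Set (Finset ℕ)) : Prop :=
  ∃ (F : Finset ℕ) (v : ℕ), F ∈ Δ ∧ F ≠ ∅ ∧ (∀ G ∈ Δ, v ∉ G) ∧ Γ = sdC v F Δ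

/-- PL homeomorphism of simplicial complexes, encoded via Alexander's theorem as
stellar equivalence: the equivalence relation generated by stellar subdivisions
(and their inverses, the welds) together with simplicial isomorphisms. -/
def PLHomeo (Δ Γ : Set (Finset ℕ)) : Prop :=
  Relation.EqvGen (fun A B => StellarMove A B ∨ IsoN A B) Δ Γ

def encV (d : ℕ) : V d → ℕ := Sum.elim (fun j => 2 * j.val) (fun j => 2 * j.val + 1)

def toN (d : ℕ) (Δ : Set (Finset (V d))) : Set (Finset ℕ) := mapC (encV d) Δ

def ballN (c : ℕ) : Set (Finset ℕ) := {F | F ⊆ Finset.range c}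

def sphereN (c : ℕ) : Set (Finset ℕ) := {F | F ⊂ Finset.range (c+1)}

/-- `Δ` is a combinatorial ball of dimension `c-1` (a `(c-1)`-simplex has `c` vertices). -/
def IsCombBall (d c : ℕ) (Δ : Set (Finset (V d))) : Prop := PLHomeo (toN d Δ) (ballN c)

/-- `Δ` is a combinatorial sphere of dimension `c-1`. -/
def IsCombSphere (d c : ℕ) (Δ : Set (Finset (V d))) : Prop := PLHomeo (toN d Δ) (sphereN c)

def ConnC (Δ : Set (Finset W)) : Prop :=
  ∀ u v : W, ({u} : Finset W) ∈ Δ → ({v} : Finset W) ∈ Δ →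
    Relation.ReflTransGen (fun a b => ({a, b} : Finset W) ∈ Δ) u v

/-- Combinatorial `d`-manifold (possibly with boundary): connected, pure, and all
links of nonempty faces are combinatorial balls or spheres of dimension `d - |F|`. -/
def IsCombManifold (d : ℕ) (Δ : Set (Finset (V d))) : Prop :=
  IsComplex Δ ∧ (∅ : Finset (V d)) ∈ Δ ∧ ConnC Δ ∧
  (∀ F ∈ Δ, ∃ G, isFacet Δ G ∧ F ⊆ G ∧ G.card = d+1) ∧
  ∀ F ∈ Δ, F ≠ (∅ : Finset (V d)) →
    (IsCombBall d (d+1-F.card) (lkC Δ F) ∨ IsCombSphere d (d+1-F.card) (lkC Δ F))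

def liftV (d : ℕ) : V d → V (d+1) := Sum.map Fin.castSucc Fin.castSucc

/-- The relabeling `π : i ↦ i+1`, `v_i ↦ v_{i+1}`. -/
def piV (d : ℕ) : V d → V (d+1) := Sum.map Fin.succ Fin.succ

/-- The relabeling `ρ : i ↦ i-1`, `v_i ↦ v_{i-1}` (indices mod `d+1`). -/
def rhoV (d : ℕ) : V d → V d := fun x =>
  match x with
  | Sum.inl j => origV d ((j.val + d) % (d+1))
  | Sum.inr j => newV d ((j.val + d) % (d+1))

/-- `ψ` swaps the vertices `d` and `v_d`. -/
def psiV (d : ℕ) : V d → V d := fun x => Equiv.swap (origV d d) (newV d d) x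

def sigmaV (d : ℕ) : V d → V d := psiV d ∘ rhoV d

/-- `Δ` is (isomorphic to) the boundary complex of the `(d+1)`-dimensional
cross-polytope. -/
def IsCrossBdry (d : ℕ) (Δ : Set (Finset W)) : Prop :=
  ∃ f : Fin (d+1) × Bool → W, Function.Injective f ∧
    Δ = {F | (∀ v ∈ F, ∃ p, v = f p) ∧
             ∀ j : Fin (d+1), ¬ (f (j, true) ∈ F ∧ f (j, false) ∈ F)}

/-- `Sg` is a connected sum of `Δ` and `Γ`: they meet exactly in the full simplex
on a common facet `F`, which is removed. -/
def IsConnSum (Δ Γ Sg : Set (Finset W)) : Prop :=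
  ∃ F : Finset W, isFacet Δ F ∧ isFacet Γ F ∧ Δ ∩ Γ = simplexOn F ∧ Sg = (Δ ∪ Γ) \ {F}

/-- Connected sum of `m+1` copies of the boundary of the `(d+1)`-cross-polytope. -/
def IsCrossStacked (d : ℕ) : ℕ → Set (Finset W) → Prop
  | 0, Δ => IsCrossBdry d Δ
  | (m+1), Δ => ∃ A B : Set (Finset W), IsCrossStacked d m A ∧ IsCrossBdry d B ∧ IsConnSum A B Δ

/-- The initial facet of the block `Diam(Γ_{iℓ})` (for block index `ℓ ≥ 1`;
block `0` uses the facet `G0` meeting the boundary). -/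
def initFacet (d i1 iℓ : ℕ) (G0 : Finset (V d)) (ℓ : ℕ) : Finset (V d) :=
  if ℓ = 0 then G0
  else ((Finset.range iℓ).image (origV d)) ∪ {newV d iℓ} ∪
       ((Finset.Ioo iℓ (max i1 iℓ)).image (origV d)) ∪
       ((Finset.Icc (max i1 iℓ) d).image (newV d))



section Aux13

variable {W : Type*} [DecidableEq W] {W' : Type*} [DecidableEq W']

lemma joinC_union_right (A B C : Set (Finset W)) :
    joinC A (B ∪ C) = joinC A B ∪ joinC A C := by
  ext s
  constructor
  · rintro ⟨a, ha, b, (hb | hb), rfl⟩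
    · exact Or.inl ⟨a, ha, b, hb, rfl⟩
    · exact Or.inr ⟨a, ha, b, hb, rfl⟩
  · rintro (⟨a, ha, b, hb, rfl⟩ | ⟨a, ha, b, hb, rfl⟩)
    · exact ⟨a, ha, b, Or.inl hb, rfl⟩
    · exact ⟨a, ha, b, Or.inr hb, rfl⟩

lemma joinC_left_comm (A B C : Set (Finset W)) :
    joinC A (joinC B C) = joinC B (joinC A C) := by
  have key : ∀ (X Y Z : Set (Finset W)) s, s ∈ joinC X (joinC Y Z) → s ∈ joinC Y (joinC X Z) := by
    rintro X Y Z s ⟨a, ha, t, ⟨b, hb, c, hc, rfl⟩, rfl⟩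
    exact ⟨b, hb, a ∪ c, ⟨a, ha, c, hc, rfl⟩, Finset.union_left_comm a b c⟩
  ext s; exact ⟨key A B C s, key B A C s⟩

lemma sdC_union (v : W) (F : Finset W) (Δ Γ : Set (Finset W)) :
    sdC v F (Δ ∪ Γ) = sdC v F Δ ∪ sdC v F Γ := by
  have hdel : delFace (Δ ∪ Γ) F = delFace Δ F ∪ delFace Γ F := by
    ext G; simp only [delFace, Set.mem_setOf_eq, Set.mem_union]; tauto
  have hlk : lkC (Δ ∪ Γ) F = lkC Δ F ∪ lkC Γ F := by
    ext G; simp only [lkC, Set.mem_setOf_eq, Set.mem_union]; tauto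
  unfold sdC
  rw [hdel, hlk, joinC_union_right, joinC_union_right, Set.union_union_union_comm]

lemma sdC_mono (v : W) (F : Finset W) {Δ Γ : Set (Finset W)} (h : Δ ⊆ Γ) :
    sdC v F Δ ⊆ sdC v F Γ := by
  rintro s (⟨h1, h2⟩ | ⟨a, ha, t, ⟨b, hb, c, ⟨hc1, hc2⟩, rfl⟩, rfl⟩)
  · exact Or.inl ⟨h h1, h2⟩
  · exact Or.inr ⟨a, ha, b ∪ c, ⟨b, hb, c, ⟨hc1, h hc2⟩, rfl⟩, rfl⟩

def FreeOf (w : W) (Δ : Set (Finset W)) : Prop := ∀ G ∈ Δ, w ∉ G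

lemma FreeOf.sdC {w v : W} (hwv : w ≠ v) {F : Finset W} {Δ : Set (Finset W)}
    (h : FreeOf w Δ) : FreeOf w (Paper.sdC v F Δ) := by
  rintro s (⟨h1, _⟩ | ⟨a, ha, t, ⟨b, hb, c, ⟨hc1, hc2⟩, rfl⟩, rfl⟩)
  · exact h _ h1
  · have hwFc : w ∉ F ∪ c := h _ hc2
    intro hmem
    rcases Finset.mem_union.1 hmem with ha' | hbc
    · exact hwv (Finset.mem_singleton.1 (ha ha'))
    · rcases Finset.mem_union.1 hbc with hb' | hc'
      · exact hwFc (Finset.mem_union_left _ (hb.1 hb'))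
      · exact hwFc (Finset.mem_union_right _ hc')

lemma sdC_nonface {v : W} {F : Finset W} {Δ : Set (Finset W)}
    (h : ∀ G ∈ Δ, ¬ F ⊆ G) : sdC v F Δ = Δ := by
  ext s
  constructor
  · rintro (⟨h1, _⟩ | ⟨a, ha, t, ⟨b, hb, c, ⟨hc1, hc2⟩, rfl⟩, rfl⟩)
    · exact h1
    · exact absurd Finset.subset_union_left (h _ hc2)
  · intro hs; exact Or.inl ⟨hs, h _ hs⟩

lemma eq_sdiff_of_union {w : W} {a b s : Finset W} (ha : a ⊆ {w}) (hwb : w ∉ b)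
    (h : s = a ∪ b) : b = s \ {w} := by
  subst h
  ext x
  simp only [Finset.mem_sdiff, Finset.mem_union, Finset.mem_singleton]
  constructor
  · intro hx; exact ⟨Or.inr hx, fun hw => hwb (hw ▸ hx)⟩
  · rintro ⟨hx | hx, hxw⟩
    · exact absurd (Finset.mem_singleton.1 (ha hx)) hxw
    · exact hx

lemma self_eq_inter_union_sdiff (s t : Finset W) : s = (s ∩ t) ∪ (s \ t) := by
  ext x
  simp only [Finset.mem_union, Finset.mem_inter, Finset.mem_sdiff]
  tauto

lemma sdC_cone {w v : W} {F : Finset W} {Δ : Set (Finset W)}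
    (hwF : w ∉ F) (hfree : FreeOf w Δ) :
    sdC v F (joinC (simplexOn {w}) Δ) = joinC (simplexOn {w}) (sdC v F Δ) := by
  have hdel : delFace (joinC (simplexOn {w}) Δ) F = joinC (simplexOn {w}) (delFace Δ F) := by
    ext s
    constructor
    · rintro ⟨⟨a, ha, b, hb, rfl⟩, hns⟩
      refine ⟨a, ha, b, ⟨hb, ?_⟩, rfl⟩
      exact fun hFb => hns (hFb.trans Finset.subset_union_right)
    · rintro ⟨a, ha, b, ⟨hb, hnb⟩, rfl⟩
      refine ⟨⟨a, ha, b, hb, rfl⟩, ?_⟩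
      intro hFs
      apply hnb
      intro x hx
      rcases Finset.mem_union.1 (hFs hx) with hxa | hxb
      · obtain rfl := Finset.mem_singleton.1 (ha hxa)
        exact absurd hx hwF
      · exact hxb
  have hlk : lkC (joinC (simplexOn {w}) Δ) F = joinC (simplexOn {w}) (lkC Δ F) := by
    ext G
    constructor
    · rintro ⟨hdis, a, ha, b, hb, hab⟩
      have hwb : w ∉ b := hfree _ hb
      have hbeq : b = (F ∪ G) \ {w} := eq_sdiff_of_union ha hwb hab
      refine ⟨G ∩ {w}, Finset.inter_subset_right, G \ {w},
        ⟨hdis.mono_right Finset.sdiff_subset, ?_⟩, self_eq_inter_union_sdiff G {w}⟩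
      have hFG : F ∪ G \ {w} = b := by
        rw [hbeq]
        ext x
        simp only [Finset.mem_union, Finset.mem_sdiff, Finset.mem_singleton]
        constructor
        · rintro (hx | ⟨hx, hxw⟩)
          · exact ⟨Or.inl hx, fun hw => hwF (hw ▸ hx)⟩
          · exact ⟨Or.inr hx, hxw⟩
        · rintro ⟨hx | hx, hxw⟩
          · exact Or.inl hx
          · exact Or.inr ⟨hx, hxw⟩
      rw [hFG]
      exact hb
    · rintro ⟨a, ha, c, ⟨hdis, hFc⟩, rfl⟩
      have hwc : w ∉ F ∪ c := hfree _ hFc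
      constructor
      · refine Finset.disjoint_union_right.2 ⟨?_, hdis⟩
        exact Finset.disjoint_left.2 fun {x} hxF hxa =>
          hwF ((Finset.mem_singleton.1 (ha hxa)) ▸ hxF)
      · exact ⟨a, ha, F ∪ c, hFc, Finset.union_left_comm F a c⟩
  show delFace (joinC (simplexOn {w}) Δ) F ∪ _ = _
  rw [hdel, hlk, joinC_left_comm (bdrySimplex F) (simplexOn {w}) (lkC Δ F),
    joinC_left_comm (simplexOn {v}) (simplexOn {w}), ← joinC_union_right]
  rfl

lemma mapC_union (f : W → W') (A B : Set (Finset W)) :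
    mapC f (A ∪ B) = mapC f A ∪ mapC f B := by
  ext s
  constructor
  · rintro ⟨G, (hG | hG), rfl⟩
    · exact Or.inl ⟨G, hG, rfl⟩
    · exact Or.inr ⟨G, hG, rfl⟩
  · rintro (⟨G, hG, rfl⟩ | ⟨G, hG, rfl⟩)
    · exact ⟨G, Or.inl hG, rfl⟩
    · exact ⟨G, Or.inr hG, rfl⟩

lemma mapC_joinC (f : W → W') (A B : Set (Finset W)) :
    mapC f (joinC A B) = joinC (mapC f A) (mapC f B) := by
  ext s
  constructor
  · rintro ⟨G, ⟨a, ha, b, hb, rfl⟩, rfl⟩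
    exact ⟨a.image f, ⟨a, ha, rfl⟩, b.image f, ⟨b, hb, rfl⟩, Finset.image_union a b⟩
  · rintro ⟨t1, ⟨a, ha, rfl⟩, t2, ⟨b, hb, rfl⟩, rfl⟩
    exact ⟨a ∪ b, ⟨a, ha, b, hb, rfl⟩, (Finset.image_union a b).symm⟩

lemma mapC_delFace {f : W → W'} (hf : Function.Injective f) (Δ : Set (Finset W))
    (F : Finset W) : mapC f (delFace Δ F) = delFace (mapC f Δ) (F.image f) := by
  ext s
  constructor
  · rintro ⟨G, ⟨hG, hnF⟩, rfl⟩
    exact ⟨⟨G, hG, rfl⟩, fun h => hnF ((Finset.image_subset_image_iff hf).1 h)⟩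
  · rintro ⟨⟨G, hG, rfl⟩, hnF⟩
    exact ⟨G, ⟨hG, fun h => hnF (Finset.image_subset_image h)⟩, rfl⟩

lemma mapC_lkC {f : W → W'} (hf : Function.Injective f) (Δ : Set (Finset W))
    (F : Finset W) : mapC f (lkC Δ F) = lkC (mapC f Δ) (F.image f) := by
  ext s
  constructor
  · rintro ⟨G, ⟨hdis, hFG⟩, rfl⟩
    exact ⟨(Finset.disjoint_image hf).2 hdis, F ∪ G, hFG, (Finset.image_union F G).symm⟩
  · rintro ⟨hdis, H, hH, heq⟩
    have hsub : s ⊆ H.image f := heq ▸ Finset.subset_union_right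
    obtain ⟨G, hGH, rfl⟩ := Finset.subset_image_iff.1 hsub
    have hFGH : F ∪ G = H := by
      apply Finset.image_injective hf
      rw [Finset.image_union, heq]
    refine ⟨G, ⟨(Finset.disjoint_image hf).1 hdis, ?_⟩, rfl⟩
    rw [hFGH]; exact hH

lemma mapC_simplexOn (f : W → W') (A : Finset W) :
    mapC f (simplexOn A) = simplexOn (A.image f) := by
  ext s
  constructor
  · rintro ⟨G, hG, rfl⟩
    exact Finset.image_subset_image hG
  · intro hs
    obtain ⟨G, hG, rfl⟩ := Finset.subset_image_iff.1 hs
    exact ⟨G, hG, rfl⟩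

lemma mapC_bdrySimplex {f : W → W'} (hf : Function.Injective f) (F : Finset W) :
    mapC f (bdrySimplex F) = bdrySimplex (F.image f) := by
  ext s
  simp only [bdrySimplex, mapC, Set.mem_setOf_eq]
  constructor
  · rintro ⟨G, hG, rfl⟩
    rw [Finset.ssubset_iff_subset_ne] at hG
    exact Finset.ssubset_iff_subset_ne.2
      ⟨Finset.image_subset_image hG.1, fun h => hG.2 (Finset.image_injective hf h)⟩
  · intro hs
    rw [Finset.ssubset_iff_subset_ne] at hs
    obtain ⟨G, hG, rfl⟩ := Finset.subset_image_iff.1 hs.1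
    exact ⟨G, Finset.ssubset_iff_subset_ne.2 ⟨hG, fun h => hs.2 (by rw [h])⟩, rfl⟩

lemma mapC_sdC {f : W → W'} (hf : Function.Injective f) (v : W) (F : Finset W)
    (Δ : Set (Finset W)) :
    mapC f (sdC v F Δ) = sdC (f v) (F.image f) (mapC f Δ) := by
  unfold sdC
  rw [mapC_union, mapC_delFace hf, mapC_joinC, mapC_joinC, mapC_simplexOn,
    mapC_bdrySimplex hf, mapC_lkC hf, Finset.image_singleton]

end Aux13

section Fold13

/-- The diamond step function. -/
private def dstep (d : ℕ) : Set (Finset (V d)) → ℕ → Set (Finset (V d)) :=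
  fun Γ i => sdC (newV d i) (Fsub d i) Γ

lemma Diam_eq_foldl (d : ℕ) (Δ : Set (Finset (V d))) :
    Diam d Δ = (List.range (d+1)).foldl (dstep d) Δ := rfl

lemma foldl_sd_union (d : ℕ) (L : List ℕ) (Δ Γ : Set (Finset (V d))) :
    L.foldl (dstep d) (Δ ∪ Γ) = L.foldl (dstep d) Δ ∪ L.foldl (dstep d) Γ := by
  induction L generalizing Δ Γ with
  | nil => rfl
  | cons i L ih =>
    simp only [List.foldl_cons]
    rw [show dstep d (Δ ∪ Γ) i = dstep d Δ i ∪ dstep d Γ i from sdC_union _ _ _ _]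
    exact ih _ _

lemma foldl_sd_mono (d : ℕ) (L : List ℕ) {Δ Γ : Set (Finset (V d))} (h : Δ ⊆ Γ) :
    L.foldl (dstep d) Δ ⊆ L.foldl (dstep d) Γ := by
  induction L generalizing Δ Γ with
  | nil => exact h
  | cons i L ih =>
    simp only [List.foldl_cons]
    exact ih (sdC_mono _ _ h)

lemma foldl_sd_free (d : ℕ) (w : V d) (hw : ∀ i, w ≠ newV d i) (L : List ℕ)
    {Δ : Set (Finset (V d))} (h : FreeOf w Δ) : FreeOf w (L.foldl (dstep d) Δ) := by
  induction L generalizing Δ with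
  | nil => exact h
  | cons i L ih =>
    simp only [List.foldl_cons]
    exact ih (FreeOf.sdC (hw i) h)

lemma foldl_sd_cone (d : ℕ) (w : V d) (hw1 : ∀ i, w ∉ Fsub d i) (hw2 : ∀ i, w ≠ newV d i)
    (L : List ℕ) {Δ : Set (Finset (V d))} (h : FreeOf w Δ) :
    L.foldl (dstep d) (joinC (simplexOn {w}) Δ) =
      joinC (simplexOn {w}) (L.foldl (dstep d) Δ) := by
  induction L generalizing Δ with
  | nil => rfl
  | cons i L ih =>
    simp only [List.foldl_cons]
    rw [show dstep d (joinC (simplexOn {w}) Δ) i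
        = joinC (simplexOn {w}) (dstep d Δ i) from sdC_cone (hw1 i) h]
    exact ih (FreeOf.sdC (hw2 i) h)

lemma origV_inj (D : ℕ) {a b : ℕ} (ha : a ≤ D+1) (hb : b ≤ D+1)
    (h : origV D a = origV D b) : a = b := by
  simp only [origV, Sum.inl.injEq, Fin.mk.injEq] at h
  rwa [Nat.mod_eq_of_lt (by omega), Nat.mod_eq_of_lt (by omega)] at h

lemma piV_origV (d j : ℕ) (hj : j ≤ d + 1) :
    piV d (origV d j) = origV (d+1) (j+1) := by
  simp only [piV, origV, Sum.map_inl, Sum.inl.injEq]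
  ext
  simp only [Fin.succ_mk, Fin.val_mk]
  rw [Nat.mod_eq_of_lt (by omega), Nat.mod_eq_of_lt (by omega)]

lemma piV_newV (d i : ℕ) (hi : i ≤ d) :
    piV d (newV d i) = newV (d+1) (i+1) := by
  simp only [piV, newV, Sum.map_inr, Sum.inr.injEq]
  ext
  simp only [Fin.succ_mk, Fin.val_mk]
  rw [Nat.mod_eq_of_lt (by omega), Nat.mod_eq_of_lt (by omega)]

lemma piV_injective (d : ℕ) : Function.Injective (piV d) :=
  Sum.map_injective.2 ⟨Fin.succ_injective _, Fin.succ_injective _⟩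

lemma piV_Fsub (d i : ℕ) (hi : i ≤ d) :
    (Fsub d i).image (piV d) = Fsub (d+1) (i+1) := by
  unfold Fsub
  rw [Finset.image_image]
  ext x
  simp only [Finset.mem_image, Finset.mem_Ioc, Function.comp_apply]
  constructor
  · rintro ⟨j, ⟨hj1, hj2⟩, rfl⟩
    exact ⟨j+1, ⟨by omega, by omega⟩, (piV_origV d j (by omega)).symm⟩
  · rintro ⟨k, ⟨hk1, hk2⟩, rfl⟩
    exact ⟨k-1, ⟨by omega, by omega⟩, by rw [piV_origV d (k-1) (by omega)]; congr 1; omega⟩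

lemma foldl_sd_map (d : ℕ) (L : List ℕ) (hL : ∀ i ∈ L, i ≤ d) (Δ : Set (Finset (V d))) :
    mapC (piV d) (L.foldl (dstep d) Δ) =
      (L.map Nat.succ).foldl (dstep (d+1)) (mapC (piV d) Δ) := by
  induction L generalizing Δ with
  | nil => rfl
  | cons i L ih =>
    simp only [List.foldl_cons, List.map_cons]
    rw [ih (fun j hj => hL j (List.mem_cons_of_mem _ hj))]
    congr 1
    show mapC (piV d) (sdC (newV d i) (Fsub d i) Δ) = _
    rw [mapC_sdC (piV_injective d), piV_newV d i (hL i (List.mem_cons_self)),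
      piV_Fsub d i (hL i (List.mem_cons_self))]
    rfl

end Fold13


section Gamma13

lemma Diam_mapC (d : ℕ) (X : Set (Finset (V d)))
    (hnf : ∀ G ∈ mapC (piV d) X, ¬ Fsub (d+1) 0 ⊆ G) :
    Diam (d+1) (mapC (piV d) X) = mapC (piV d) (Diam d X) := by
  rw [Diam_eq_foldl, Diam_eq_foldl, List.range_succ_eq_map, List.foldl_cons]
  rw [show dstep (d+1) (mapC (piV d) X) 0 = mapC (piV d) X from sdC_nonface hnf]
  exact (foldl_sd_map d _ (fun i hi => Nat.lt_succ_iff.1 (List.mem_range.1 hi)) X).symm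

lemma nonface_Fsub0 (d : ℕ) (J : Finset ℕ) (hJ : ∀ j ∈ J, j ≤ d) :
    ∀ G ∈ mapC (piV d) (GammaU d J), ¬ Fsub (d+1) 0 ⊆ G := by
  rintro G' ⟨G, ⟨j, hjJ, hGsub⟩, rfl⟩ hsub
  have hj := hJ j hjJ
  have hmem : origV (d+1) (j+1) ∈ Fsub (d+1) 0 := by
    exact Finset.mem_image_of_mem _ (Finset.mem_Ioc.2 ⟨by omega, by omega⟩)
  have hmem' := hsub hmem
  rw [Finset.mem_image] at hmem'
  obtain ⟨y, hyG, hy⟩ := hmem'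
  have hyG' := hGsub hyG
  rw [Gface, Finset.mem_image] at hyG'
  obtain ⟨k, hk, rfl⟩ := hyG'
  rw [Finset.mem_filter, Finset.mem_range] at hk
  rw [piV_origV d k (by omega)] at hy
  have := origV_inj (d+1) (by omega) (by omega) hy
  omega

lemma free_GammaU0 (d : ℕ) : FreeOf (origV (d+1) 0) (GammaU (d+1) {0}) := by
  rintro G ⟨i, hi, hsub⟩ hmem
  rw [Finset.mem_singleton] at hi; subst hi
  have h := hsub hmem
  rw [Gface, Finset.mem_image] at h
  obtain ⟨k, hk, hkeq⟩ := h
  rw [Finset.mem_filter, Finset.mem_range] at hk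
  exact hk.2 (origV_inj (d+1) (by omega) (by omega) hkeq)

lemma free_mapC_piV (d : ℕ) (X : Set (Finset (V d))) :
    FreeOf (origV (d+1) 0) (mapC (piV d) X) := by
  rintro G' ⟨G, _, rfl⟩ hmem
  rw [Finset.mem_image] at hmem
  obtain ⟨y, _, hy⟩ := hmem
  cases y with
  | inl a =>
    simp only [piV, origV, Sum.map_inl, Sum.inl.injEq, Fin.ext_iff, Fin.val_succ, Fin.val_mk,
      Nat.zero_mod] at hy
    omega
  | inr a => simp [piV, origV] at hy

lemma origV0_not_mem_Fsub (d i : ℕ) : origV (d+1) 0 ∉ Fsub (d+1) i := by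
  intro h
  rw [Fsub, Finset.mem_image] at h
  obtain ⟨k, hk, hkeq⟩ := h
  rw [Finset.mem_Ioc] at hk
  have := origV_inj (d+1) (by omega) (by omega) hkeq
  omega

lemma origV0_ne_newV (d i : ℕ) : origV (d+1) 0 ≠ newV (d+1) i := by
  simp [origV, newV]

lemma GammaU_split (D : ℕ) (I : Finset ℕ) (h0 : 0 ∈ I) :
    GammaU D I = GammaU D (I.erase 0) ∪ GammaU D {0} := by
  ext F
  constructor
  · rintro ⟨i, hi, hF⟩
    by_cases h : i = 0
    · subst h; exact Or.inr ⟨0, Finset.mem_singleton_self 0, hF⟩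
    · exact Or.inl ⟨i, Finset.mem_erase.2 ⟨h, hi⟩, hF⟩
  · rintro (⟨i, hi, hF⟩ | ⟨i, hi, hF⟩)
    · exact ⟨i, (Finset.mem_erase.1 hi).2, hF⟩
    · rw [Finset.mem_singleton] at hi; subst hi; exact ⟨0, h0, hF⟩

lemma Gface_succ (d i : ℕ) (h1 : 1 ≤ i) (h2 : i ≤ d+2) :
    Gface (d+1) i = insert (origV (d+1) 0) ((Gface d (i-1)).image (piV d)) := by
  ext x
  simp only [Gface, Finset.mem_insert, Finset.mem_image, Finset.mem_filter, Finset.mem_range]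
  constructor
  · rintro ⟨k, ⟨hk, hki⟩, rfl⟩
    rcases Nat.eq_zero_or_pos k with rfl | hk0
    · exact Or.inl rfl
    · refine Or.inr ⟨origV d (k-1), ⟨k-1, ⟨by omega, by omega⟩, rfl⟩, ?_⟩
      rw [piV_origV d (k-1) (by omega)]
      congr 1
      omega
  · rintro (rfl | ⟨y, ⟨j, ⟨hj, hji⟩, rfl⟩, rfl⟩)
    · exact ⟨0, ⟨by omega, by omega⟩, rfl⟩
    · rw [piV_origV d j (by omega)]
      exact ⟨j+1, ⟨by omega, by omega⟩, rfl⟩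

lemma GammaU_erase_cone (d : ℕ) (I : Finset ℕ) (hI : ∀ i ∈ I, i ≤ d+1) :
    GammaU (d+1) (I.erase 0) =
      joinC (simplexOn {origV (d+1) 0})
        (mapC (piV d) (GammaU d ((I.erase 0).image (· - 1)))) := by
  ext F
  constructor
  · rintro ⟨i, hi, hsub⟩
    rw [Finset.mem_erase] at hi
    have h1 : 1 ≤ i := Nat.one_le_iff_ne_zero.2 hi.1
    have h2 : i ≤ d+1 := hI i hi.2
    rw [Gface_succ d i h1 (by omega)] at hsub
    refine ⟨F ∩ {origV (d+1) 0}, Finset.inter_subset_right, F \ {origV (d+1) 0}, ?_,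
      self_eq_inter_union_sdiff F {origV (d+1) 0}⟩
    have hsub' : F \ {origV (d+1) 0} ⊆ (Gface d (i-1)).image (piV d) := by
      intro x hx
      rw [Finset.mem_sdiff, Finset.mem_singleton] at hx
      rcases Finset.mem_insert.1 (hsub hx.1) with h | h
      · exact absurd h hx.2
      · exact h
    obtain ⟨G, hG, hGeq⟩ := Finset.subset_image_iff.1 hsub'
    exact ⟨G, ⟨i-1, Finset.mem_image_of_mem _ (Finset.mem_erase.2 hi), hG⟩, hGeq.symm⟩
  · rintro ⟨a, ha, b, ⟨G, ⟨j, hj, hGsub⟩, rfl⟩, rfl⟩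
    have ha' : a ⊆ {origV (d+1) 0} := ha
    rw [Finset.mem_image] at hj
    obtain ⟨i, hiI, rfl⟩ := hj
    rw [Finset.mem_erase] at hiI
    have h1 : 1 ≤ i := Nat.one_le_iff_ne_zero.2 hiI.1
    have h2 : i ≤ d+1 := hI i hiI.2
    refine ⟨i, Finset.mem_erase.2 hiI, ?_⟩
    rw [Gface_succ d i h1 (by omega)]
    intro x hx
    rcases Finset.mem_union.1 hx with hx | hx
    · exact Finset.mem_insert.2 (Or.inl (Finset.mem_singleton.1 (ha' hx)))
    · exact Finset.mem_insert_of_mem (Finset.image_subset_image hGsub hx)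

lemma piV_GammaU_subset (d : ℕ) (J : Finset ℕ) :
    mapC (piV d) (GammaU d J) ⊆ GammaU (d+1) {0} := by
  rintro G' ⟨G, ⟨j, _, hGsub⟩, rfl⟩
  refine ⟨0, Finset.mem_singleton_self 0, ?_⟩
  intro x hx
  rw [Finset.mem_image] at hx
  obtain ⟨y, hyG, rfl⟩ := hx
  have h := hGsub hyG
  rw [Gface, Finset.mem_image] at h
  obtain ⟨k, hk, rfl⟩ := h
  rw [Finset.mem_filter, Finset.mem_range] at hk
  rw [piV_origV d k (by omega), Gface]
  exact Finset.mem_image_of_mem _ (Finset.mem_filter.2 ⟨Finset.mem_range.2 (by omega), by omega⟩)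

end Gamma13

/-- (paper's dimension `d` rendered as `d+1`) decomposition of
`⋄(Γ_I)` when `0 ∈ I`. -/
theorem stmt13 (d : ℕ) (I : Finset ℕ) (hI : ∀ i ∈ I, i ≤ d+1) (h0 : 0 ∈ I) :
    DiamU (d+1) I = DiamU (d+1) (I.erase 0) ∪ DiamU (d+1) {0} ∧
    DiamU (d+1) (I.erase 0) ∩ DiamU (d+1) {0} =
      mapC (piV d) (DiamU d ((I.erase 0).image (· - 1))) ∧
    IsInduced (DiamU (d+1) {0}) (DiamU (d+1) I) := by
  have hJ : ∀ j ∈ (I.erase 0).image (· - 1), j ≤ d := by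
    intro j hj
    rw [Finset.mem_image] at hj
    obtain ⟨i, hi, rfl⟩ := hj
    have := hI i (Finset.mem_erase.1 hi).2
    omega
  have hnf := nonface_Fsub0 d ((I.erase 0).image (· - 1)) hJ
  have h1 : DiamU (d+1) I = DiamU (d+1) (I.erase 0) ∪ DiamU (d+1) {0} := by
    show Diam (d+1) (GammaU (d+1) I) = _
    rw [GammaU_split (d+1) I h0, Diam_eq_foldl, foldl_sd_union]
    rfl
  have hπD : Diam (d+1) (mapC (piV d) (GammaU d ((I.erase 0).image (· - 1)))) =
      mapC (piV d) (DiamU d ((I.erase 0).image (· - 1))) :=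
    Diam_mapC d _ hnf
  have hcone : DiamU (d+1) (I.erase 0) =
      joinC (simplexOn {origV (d+1) 0})
        (mapC (piV d) (DiamU d ((I.erase 0).image (· - 1)))) := by
    show Diam (d+1) (GammaU (d+1) (I.erase 0)) = _
    rw [GammaU_erase_cone d I hI, Diam_eq_foldl,
      foldl_sd_cone (d+1) (origV (d+1) 0) (origV0_not_mem_Fsub d) (origV0_ne_newV d) _
        (free_mapC_piV d _), ← Diam_eq_foldl, hπD]
  have hfreeΓ : FreeOf (origV (d+1) 0) (DiamU (d+1) {0}) := by
    show FreeOf _ (Diam (d+1) (GammaU (d+1) {0}))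
    rw [Diam_eq_foldl]
    exact foldl_sd_free (d+1) _ (origV0_ne_newV d) _ (free_GammaU0 d)
  have hsub : mapC (piV d) (DiamU d ((I.erase 0).image (· - 1))) ⊆ DiamU (d+1) {0} := by
    rw [← hπD]
    show Diam (d+1) _ ⊆ Diam (d+1) _
    rw [Diam_eq_foldl, Diam_eq_foldl]
    exact foldl_sd_mono _ _ (piV_GammaU_subset d _)
  have h2 : DiamU (d+1) (I.erase 0) ∩ DiamU (d+1) {0} =
      mapC (piV d) (DiamU d ((I.erase 0).image (· - 1))) := by
    apply Set.Subset.antisymm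
    · rintro F ⟨hF1, hF2⟩
      rw [hcone] at hF1
      obtain ⟨a, ha, b, hb, rfl⟩ := hF1
      have ha' : a ⊆ {origV (d+1) 0} := ha
      have hwF : origV (d+1) 0 ∉ a ∪ b := hfreeΓ _ hF2
      have hae : a = ∅ := by
        rw [Finset.eq_empty_iff_forall_notMem]
        intro x hx
        obtain rfl := Finset.mem_singleton.1 (ha' hx)
        exact hwF (Finset.mem_union_left _ hx)
      rw [hae, Finset.empty_union]
      exact hb
    · intro F hF
      refine ⟨?_, hsub hF⟩
      rw [hcone]
      exact ⟨∅, Finset.empty_subset _, F, hF, (Finset.empty_union F).symm⟩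
  refine ⟨h1, h2, ?_, ?_⟩
  · rw [h1]; exact Set.subset_union_right
  · intro F hF hvert
    rw [h1] at hF
    rcases hF with hF | hF
    · rw [hcone] at hF
      obtain ⟨a, ha, b, hb, rfl⟩ := hF
      have ha' : a ⊆ {origV (d+1) 0} := ha
      have hae : a = ∅ := by
        rw [Finset.eq_empty_iff_forall_notMem]
        intro x hx
        obtain rfl := Finset.mem_singleton.1 (ha' hx)
        exact hfreeΓ _ (hvert _ (Finset.mem_union_left _ hx))
          (Finset.mem_singleton_self _)
      rw [hae, Finset.empty_union]
      exact hsub hb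
    · exact hF

end Paper
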